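/- Let G be a finite simple graph containing no theta, pyramid, prism, or turtle as an induced subgraph, and let H be a hole in G. Then every minor vertex u for H satisfies exactly one of the following: u has a unique neighbor in H (u is a pendant of H); u has exactly two neighbors in H and they are adjacent (u is a cap of H); or u has exactly three neighbors in H which induce a path x-y-z of H (u is a clone of y in H). -/

import Mathlib

namespace Paper

open SimpleGraph

variable {V : Type*}

/-- The set of neighbors of `v` inside the set `H`. -/
def nbrsIn (G : SimpleGraph V) (v : V) (H : Set V) : Set V :=
  {u | u ∈ H ∧ G.Adj v u}

/-- The vertex set of a walk. -/
def supp {G : SimpleGraph V} {a b : V} (P : G.Walk a b) : Set V :=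
  {v | v ∈ P.support}

/-- `H` is a hole of `G`: an induced cycle of length at least 4.  (A finite
graph is a cycle iff it is connected and `2`-regular.) -/
def IsHole (G : SimpleGraph V) (H : Set V) : Prop :=
  H.Finite ∧ 4 ≤ H.ncard ∧ (G.induce H).Connected ∧
    ∀ v ∈ H, (nbrsIn G v H).ncard = 2

/-- `G` contains a theta as an induced subgraph. -/
def HasTheta (G : SimpleGraph V) : Prop :=
  ∃ (a b : V) (P₁ P₂ P₃ : G.Walk a b),
    a ≠ b ∧ ¬ G.Adj a b ∧
    P₁.IsPath ∧ P₂.IsPath ∧ P₃.IsPath ∧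
    2 ≤ P₁.length ∧ 2 ≤ P₂.length ∧ 2 ≤ P₃.length ∧
    (∀ v, v ∈ P₁.support → v ∈ P₂.support → v = a ∨ v = b) ∧
    (∀ v, v ∈ P₁.support → v ∈ P₃.support → v = a ∨ v = b) ∧
    (∀ v, v ∈ P₂.support → v ∈ P₃.support → v = a ∨ v = b) ∧
    IsHole G (supp P₁ ∪ supp P₂) ∧
    IsHole G (supp P₁ ∪ supp P₃) ∧
    IsHole G (supp P₂ ∪ supp P₃)

/-- `G` contains a pyramid as an induced subgraph. -/
def HasPyramid (G : SimpleGraph V) : Prop :=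
  ∃ (a b₁ b₂ b₃ : V) (P₁ : G.Walk a b₁) (P₂ : G.Walk a b₂) (P₃ : G.Walk a b₃),
    G.Adj b₁ b₂ ∧ G.Adj b₂ b₃ ∧ G.Adj b₁ b₃ ∧
    P₁.IsPath ∧ P₂.IsPath ∧ P₃.IsPath ∧
    (∀ v, v ∈ P₁.support → v ∈ P₂.support → v = a) ∧
    (∀ v, v ∈ P₁.support → v ∈ P₃.support → v = a) ∧
    (∀ v, v ∈ P₂.support → v ∈ P₃.support → v = a) ∧
    ¬ (P₁.length = 1 ∧ P₂.length = 1) ∧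
    ¬ (P₁.length = 1 ∧ P₃.length = 1) ∧
    ¬ (P₂.length = 1 ∧ P₃.length = 1) ∧
    IsHole G (supp P₁ ∪ supp P₂) ∧
    IsHole G (supp P₁ ∪ supp P₃) ∧
    IsHole G (supp P₂ ∪ supp P₃)

/-- `G` contains a prism as an induced subgraph. -/
def HasPrism (G : SimpleGraph V) : Prop :=
  ∃ (a₁ a₂ a₃ b₁ b₂ b₃ : V) (P₁ : G.Walk a₁ b₁) (P₂ : G.Walk a₂ b₂)
      (P₃ : G.Walk a₃ b₃),
    G.Adj a₁ a₂ ∧ G.Adj a₂ a₃ ∧ G.Adj a₁ a₃ ∧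
    G.Adj b₁ b₂ ∧ G.Adj b₂ b₃ ∧ G.Adj b₁ b₃ ∧
    P₁.IsPath ∧ P₂.IsPath ∧ P₃.IsPath ∧
    (∀ v, v ∈ P₁.support → v ∉ P₂.support) ∧
    (∀ v, v ∈ P₁.support → v ∉ P₃.support) ∧
    (∀ v, v ∈ P₂.support → v ∉ P₃.support) ∧
    IsHole G (supp P₁ ∪ supp P₂) ∧
    IsHole G (supp P₁ ∪ supp P₃) ∧
    IsHole G (supp P₂ ∪ supp P₃)

/-- `G` contains a turtle as an induced subgraph. -/
def HasTurtle (G : SimpleGraph V) : Prop :=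
  ∃ (a₁ b₁ a₂ b₂ x y : V) (P₁ : G.Walk a₁ b₁) (P₂ : G.Walk a₂ b₂),
    P₁.IsPath ∧ P₂.IsPath ∧
    (∀ v, v ∈ P₁.support → v ∉ P₂.support) ∧
    G.Adj a₁ a₂ ∧ G.Adj b₁ b₂ ∧ G.Adj x y ∧
    x ∉ P₁.support ∧ x ∉ P₂.support ∧ y ∉ P₁.support ∧ y ∉ P₂.support ∧
    IsHole G (supp P₁ ∪ supp P₂) ∧
    3 ≤ (nbrsIn G x (supp P₁)).ncard ∧
    (∀ v ∈ P₂.support, ¬ G.Adj x v) ∧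
    3 ≤ (nbrsIn G y (supp P₂)).ncard ∧
    (∀ v ∈ P₁.support, ¬ G.Adj y v)

/-- `G` contains no theta, pyramid, prism, or turtle as an induced subgraph. -/
def TPPTFree (G : SimpleGraph V) : Prop :=
  ¬ HasTheta G ∧ ¬ HasPyramid G ∧ ¬ HasPrism G ∧ ¬ HasTurtle G

/-- The neighborhood of a set `X`: all vertices outside `X` with a neighbor in `X`. -/
def setNbrs (G : SimpleGraph V) (X : Set V) : Set V :=
  {v | v ∉ X ∧ ∃ x ∈ X, G.Adj x v}

/-- `A` is a connected component of `G ∖ C`. -/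
def IsCompOf (G : SimpleGraph V) (C A : Set V) : Prop :=
  A.Nonempty ∧ Disjoint A C ∧ (G.induce A).Connected ∧
    ∀ a ∈ A, ∀ b : V, G.Adj a b → b ∉ C → b ∈ A

/-- `C` is a minimal separator of `G`: there are two distinct components `L`, `R`
of `G ∖ C` with `N(L) = N(R) = C`. -/
def IsMinSep (G : SimpleGraph V) (C : Set V) : Prop :=
  ∃ L R : Set V, IsCompOf G C L ∧ IsCompOf G C R ∧ L ≠ R ∧
    setNbrs G L = C ∧ setNbrs G R = C

/-- A proper separator: a minimal separator that is not a clique. -/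
def IsProperSep (G : SimpleGraph V) (C : Set V) : Prop :=
  IsMinSep G C ∧ ¬ (∀ a ∈ C, ∀ b ∈ C, a ≠ b → G.Adj a b)

/-- `u` is a minor vertex for the hole `H`: `u ∉ H`, `u` has a neighbor in `H` and
all its neighbors in `H` lie in a path of `H` with at most three vertices. -/
def IsMinorFor (G : SimpleGraph V) (u : V) (H : Set V) : Prop :=
  u ∉ H ∧ (nbrsIn G u H).Nonempty ∧
    ∃ a b c : V, a ∈ H ∧ b ∈ H ∧ c ∈ H ∧ G.Adj a b ∧ G.Adj b c ∧ a ≠ c ∧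
      nbrsIn G u H ⊆ {a, b, c}

/-- `u` is a major vertex for the hole `H`. -/
def IsMajorFor (G : SimpleGraph V) (u : V) (H : Set V) : Prop :=
  u ∉ H ∧ (nbrsIn G u H).Nonempty ∧ ¬ IsMinorFor G u H

/-- `u` is a pendant of `H`: it has a unique neighbor in `H`. -/
def IsPendant (G : SimpleGraph V) (u : V) (H : Set V) : Prop :=
  u ∉ H ∧ ∃ a : V, nbrsIn G u H = {a}

/-- `u` is a cap of `H`: it has exactly two neighbors in `H` and they are adjacent. -/
def IsCap (G : SimpleGraph V) (u : V) (H : Set V) : Prop :=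
  u ∉ H ∧ ∃ a b : V, a ≠ b ∧ G.Adj a b ∧ nbrsIn G u H = {a, b}

/-- `u` is a clone of `y` in `H`: its neighbors in `H` are exactly the three
vertices of a path `x-y-z` of `H`. -/
def IsCloneOf (G : SimpleGraph V) (u y : V) (H : Set V) : Prop :=
  u ∉ H ∧ ∃ x z : V, x ∈ H ∧ y ∈ H ∧ z ∈ H ∧ G.Adj x y ∧ G.Adj y z ∧ x ≠ z ∧
    nbrsIn G u H = {x, y, z}

/-- `u` is a clone (of some vertex) in `H`. -/
def IsClone (G : SimpleGraph V) (u : V) (H : Set V) : Prop :=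
  ∃ y, IsCloneOf G u y H

/-- `P` is a `u`-sector of the hole `H`: a path contained in `H` whose ends are
neighbors of `u` and whose interior is anticomplete to `u`. -/
def IsSector (G : SimpleGraph V) (u : V) (H : Set V) {a b : V} (P : G.Walk a b) : Prop :=
  P.IsPath ∧ (∀ v ∈ P.support, v ∈ H) ∧ G.Adj u a ∧ G.Adj u b ∧
    ∀ v ∈ P.support, v ≠ a → v ≠ b → ¬ G.Adj u v

/-- `u` and `v` are nested with respect to the hole `H`: there are distinct
`a, b ∈ H` such that one `ab`-path of `H` contains all neighbors of `u` in `H`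
and the other `ab`-path of `H` contains all neighbors of `v` in `H`. -/
def Nested (G : SimpleGraph V) (u v : V) (H : Set V) : Prop :=
  ∃ a b : V, a ∈ H ∧ b ∈ H ∧ a ≠ b ∧
    ∃ (P Q : G.Walk a b), P.IsPath ∧ Q.IsPath ∧
      supp P ∪ supp Q = H ∧
      (∀ x, x ∈ P.support → x ∈ Q.support → x = a ∨ x = b) ∧
      (∀ x ∈ H, G.Adj u x → x ∈ P.support) ∧
      (∀ x ∈ H, G.Adj v x → x ∈ Q.support)

/-- `u` is a hub for the hole `H`: its neighbors in `H` are exactly four vertices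
`p, q, r, s` appearing in that order along `H`, with `pq, rs ∈ E(G)` and
`ps, qr ∉ E(G)`. -/
def IsHub (G : SimpleGraph V) (u : V) (H : Set V) : Prop :=
  u ∉ H ∧ ∃ (p q r s : V) (A : G.Walk q r) (B : G.Walk s p),
    p ≠ q ∧ p ≠ r ∧ p ≠ s ∧ q ≠ r ∧ q ≠ s ∧ r ≠ s ∧
    nbrsIn G u H = {p, q, r, s} ∧
    G.Adj p q ∧ G.Adj r s ∧ ¬ G.Adj p s ∧ ¬ G.Adj q r ∧
    A.IsPath ∧ B.IsPath ∧
    (∀ v, v ∈ A.support → v ∉ B.support) ∧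
    supp A ∪ supp B = H

/-- `N` is an extended neighborhood of `w` in the hole `H`. -/
def IsExtNbhd (G : SimpleGraph V) (w : V) (H N : Set V) : Prop :=
  ∃ (x y x' y' : V) (Q : G.Walk x y),
    IsSector G w H Q ∧
    x' ∈ H ∧ x' ∉ Q.support ∧ G.Adj x' x ∧
    y' ∈ H ∧ y' ∉ Q.support ∧ G.Adj y' y ∧
    N = supp Q ∪ ({x', y'} ∩ nbrsIn G w H)

/-- `a` and `b` are distant in `H` with respect to `w`: no extended neighborhood
of `w` in `H` contains both `a` and `b`. -/
def Distant (G : SimpleGraph V) (w : V) (H : Set V) (a b : V) : Prop :=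
  a ∈ H ∧ b ∈ H ∧ ∀ N : Set V, IsExtNbhd G w H N → ¬ (a ∈ N ∧ b ∈ N)

/-- `P` is an `(H, w)`-significant path. -/
def IsSignificant (G : SimpleGraph V) (w : V) (H : Set V) {p q : V}
    (P : G.Walk p q) : Prop :=
  P.IsPath ∧ ∃ a b : V, a ∈ H ∧ G.Adj p a ∧ ¬ G.Adj w a ∧ b ∈ H ∧ G.Adj q b ∧
    Distant G w H a b

/-- `v` is a gem-center for the hole `H`. -/
def IsGemCenter (G : SimpleGraph V) (v : V) (H : Set V) : Prop :=
  5 ≤ H.ncard ∧ ∃ h₁ h₂ h₃ h₄ : V, h₁ ∈ H ∧ h₂ ∈ H ∧ h₃ ∈ H ∧ h₄ ∈ H ∧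
    G.Adj h₁ h₂ ∧ G.Adj h₂ h₃ ∧ G.Adj h₃ h₄ ∧ h₁ ≠ h₃ ∧ h₁ ≠ h₄ ∧ h₂ ≠ h₄ ∧
    nbrsIn G v H = {h₁, h₂, h₃, h₄}

/-- `x` is the center of a star cutset of `G`. -/
def IsStarCutsetCenter (G : SimpleGraph V) (x : V) : Prop :=
  ∃ X : Set V, x ∈ X ∧ (∀ y ∈ X, y ≠ x → G.Adj x y) ∧
    ¬ (G.induce (Xᶜ)).Preconnected

/-- `v` is `(c₁, c₂)`-heavy with respect to the hole `H`. -/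
def IsHeavy (G : SimpleGraph V) (c₁ c₂ : V) (H : Set V) (v : V) : Prop :=
  IsMajorFor G v H ∧ Distant G v H c₁ c₂

/-- The pair of paths `HL`, `HR` forms a `(C, c₁, c₂)`-hole with frame
`(c₁, c₂, ℓ₁', ℓ₁, r₁, r₁', ℓ₂', ℓ₂, r₂, r₂')`, where `L` and `R` are the two
full components of the proper separator `C`. -/
def IsCHoleWithFrame (G : SimpleGraph V) (C L R : Set V)
    (c₁ c₂ ℓ₁ ℓ₁' ℓ₂ ℓ₂' r₁ r₁' r₂ r₂' : V) (HL HR : G.Walk c₁ c₂) : Prop :=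
  HL.IsPath ∧ HR.IsPath ∧
  (∀ v, v ∈ HL.support → v ∈ HR.support → v = c₁ ∨ v = c₂) ∧
  IsHole G (supp HL ∪ supp HR) ∧
  c₁ ∈ C ∧ c₂ ∈ C ∧
  (∀ v, v ∈ HL.support → v ≠ c₁ → v ≠ c₂ → v ∈ L) ∧
  (∀ v, v ∈ HR.support → v ≠ c₁ → v ≠ c₂ → v ∈ R) ∧
  (supp HL ∪ supp HR) ∩ C = {c₁, c₂} ∧
  ℓ₁ ∈ HL.support ∧ ℓ₁ ≠ c₂ ∧ G.Adj c₁ ℓ₁ ∧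
  ℓ₂ ∈ HL.support ∧ ℓ₂ ≠ c₁ ∧ G.Adj c₂ ℓ₂ ∧
  r₁ ∈ HR.support ∧ r₁ ≠ c₂ ∧ G.Adj c₁ r₁ ∧
  r₂ ∈ HR.support ∧ r₂ ≠ c₁ ∧ G.Adj c₂ r₂ ∧
  ((ℓ₁ = ℓ₂ ∧ ℓ₁' = ℓ₁) ∨
    (ℓ₁ ≠ ℓ₂ ∧ ℓ₁' ∈ HL.support ∧ ℓ₁' ≠ c₁ ∧ ℓ₁' ≠ c₂ ∧ G.Adj ℓ₁ ℓ₁')) ∧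
  ((ℓ₁ = ℓ₂ ∧ ℓ₂' = ℓ₂) ∨
    (ℓ₁ ≠ ℓ₂ ∧ ℓ₂' ∈ HL.support ∧ ℓ₂' ≠ c₁ ∧ ℓ₂' ≠ c₂ ∧ G.Adj ℓ₂ ℓ₂')) ∧
  ((r₁ = r₂ ∧ r₁' = r₁) ∨
    (r₁ ≠ r₂ ∧ r₁' ∈ HR.support ∧ r₁' ≠ c₁ ∧ r₁' ≠ c₂ ∧ G.Adj r₁ r₁')) ∧
  ((r₁ = r₂ ∧ r₂' = r₂) ∨
    (r₁ ≠ r₂ ∧ r₂' ∈ HR.support ∧ r₂' ≠ c₁ ∧ r₂' ≠ c₂ ∧ G.Adj r₂ r₂'))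

/-- The 3-dimensional hypercube graph: vertices are elements of `{0,1}³`, two
vertices being adjacent exactly when they differ in one coordinate. -/
def cubeGraph : SimpleGraph (Fin 3 → Bool) where
  Adj x y := ∃! i, x i ≠ y i
  symm := by
    constructor
    rintro x y ⟨i, hi, hj⟩
    exact ⟨i, Ne.symm hi, fun j h => hj j (Ne.symm h)⟩
  loopless := by
    constructor
    rintro x ⟨i, hi, -⟩
    exact hi rfl


section AuxTrichotomy

variable {G : SimpleGraph V}

lemma nbrsIn_subset' (G : SimpleGraph V) (v : V) (H : Set V) :
    nbrsIn G v H ⊆ H := fun _ hx => hx.1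

lemma other_of_ncard_two {s : Set V} (h2 : s.ncard = 2) {x : V} (hx : x ∈ s) :
    ∃ y, y ≠ x ∧ s = {x, y} := by
  obtain ⟨p, q, hpq, rfl⟩ := Set.ncard_eq_two.mp h2
  rcases hx with rfl | hx
  · exact ⟨q, hpq.symm, rfl⟩
  · rcases hx with rfl
    exact ⟨p, hpq, Set.pair_comm p x⟩

lemma eq_pair_of_ncard_two {s : Set V} (hfin : s.Finite) (h2 : s.ncard = 2)
    {x y : V} (hx : x ∈ s) (hy : y ∈ s) (hxy : x ≠ y) : s = {x, y} := by
  refine (Set.eq_of_subset_of_ncard_le ?_ ?_ hfin).symm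
  · rintro z (rfl | rfl) <;> assumption
  · rw [h2, Set.ncard_pair hxy]

lemma supp_ncard {a v : V} {P : G.Walk a v} (hP : P.IsPath) :
    (supp P).ncard = P.length + 1 := by
  classical
  have h1 : supp P = ↑P.support.toFinset := by ext z; simp [supp]
  rw [h1, Set.ncard_coe_finset, List.toFinset_card_of_nodup hP.support_nodup,
    SimpleGraph.Walk.length_support]

lemma reachable_induce_of_walk {S : Set V} :
    ∀ {x y : V} (p : G.Walk x y), (∀ v ∈ p.support, v ∈ S) →
      ∀ (hx : x ∈ S) (hy : y ∈ S), (G.induce S).Reachable ⟨x, hx⟩ ⟨y, hy⟩ := by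
  intro x y p
  induction p with
  | nil => intro _ hx hy; exact Reachable.refl _
  | @cons x' v' y' h p ih =>
    intro hsupp hx hy
    have hv' : v' ∈ S := hsupp v' (by simp)
    have hadj : (G.induce S).Adj ⟨x', hx⟩ ⟨v', hv'⟩ := by simpa using h
    exact hadj.reachable.trans (ih (fun w hw => hsupp w (by simp [hw])) hv' hy)

lemma closed_of_connected {H S : Set V} (hconn : (G.induce H).Connected)
    (hcl : ∀ x ∈ S, x ∈ H → ∀ y ∈ H, G.Adj x y → y ∈ S)
    {x : V} (hx : x ∈ S) (hxH : x ∈ H) {y : V} (hy : y ∈ H) : y ∈ S := by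
  obtain ⟨w⟩ := hconn.preconnected ⟨x, hxH⟩ ⟨y, hy⟩
  have key : ∀ (s t : ↥H) (p : (G.induce H).Walk s t), (s : V) ∈ S → (t : V) ∈ S := by
    intro s t p
    induction p with
    | nil => exact id
    | @cons s' v' t' h p ih =>
      intro hs
      exact ih (hcl _ hs s'.2 _ v'.2 (by simpa using h))
  exact key _ _ w hx

lemma exists_penult {a v : V} {P : G.Walk a v} (h : ¬ P.Nil) :
    ∃ w, w ∈ P.support ∧ G.Adj w v := by
  have h' : ¬ P.reverse.Nil := by
    rw [SimpleGraph.Walk.nil_iff_length_eq] at h ⊢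
    rwa [SimpleGraph.Walk.length_reverse]
  obtain ⟨x, hadj, q, hq⟩ := SimpleGraph.Walk.not_nil_iff.mp h'
  refine ⟨x, ?_, hadj.symm⟩
  have : x ∈ P.reverse.support := by rw [hq]; simp
  rwa [SimpleGraph.Walk.support_reverse, List.mem_reverse] at this

lemma grow {H : Set V} (hfin : H.Finite)
    (hdeg : ∀ v ∈ H, (nbrsIn G v H).ncard = 2)
    {a b c : V} (hbH : b ∈ H) (hnb : nbrsIn G b H = {a, c}) (hac : a ≠ c)
    (haH : a ∈ H) :
    ∀ (n : ℕ) (v : V) (P : G.Walk a v), P.IsPath →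
      (∀ w ∈ P.support, w ∈ H ∧ w ≠ b) →
      (∀ w ∈ P.support, w ≠ v → nbrsIn G w H ⊆ supp P ∪ {b}) →
      (∀ y ∈ P.support, ∀ z ∈ P.support, G.Adj v y → G.Adj v z → y = z) →
      H.ncard ≤ P.length + 1 + n →
      ∃ Q : G.Walk a c, Q.IsPath ∧ (∀ w ∈ Q.support, w ∈ H ∧ w ≠ b) ∧
        (∀ w ∈ Q.support, w ≠ c → nbrsIn G w H ⊆ supp Q ∪ {b}) := by
  have hadjba : G.Adj b a := (show a ∈ nbrsIn G b H by rw [hnb]; left; rfl).2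
  intro n
  induction n with
  | zero =>
    intro v P hpath hsup hcl hend hlen
    by_cases hvc : v = c
    · subst hvc; exact ⟨P, hpath, hsup, hcl⟩
    · exfalso
      have hsub : supp P ⊆ H \ {b} := fun w hw => ⟨(hsup w hw).1, (hsup w hw).2⟩
      have h1 : (supp P).ncard ≤ (H \ {b}).ncard :=
        Set.ncard_le_ncard hsub hfin.diff
      rw [supp_ncard hpath, Set.ncard_diff_singleton_of_mem hbH] at h1
      have h0 : 0 < H.ncard := (Set.ncard_pos hfin).mpr ⟨b, hbH⟩
      omega
  | succ n ih =>
    intro v P hpath hsup hcl hend hlen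
    by_cases hvc : v = c
    · subst hvc; exact ⟨P, hpath, hsup, hcl⟩
    have hvH := (hsup v P.end_mem_support).1
    have hvb := (hsup v P.end_mem_support).2
    obtain ⟨x, hxH, hxb, hvx, hxsup, hclv⟩ :
        ∃ x, x ∈ H ∧ x ≠ b ∧ G.Adj v x ∧ x ∉ P.support ∧
          nbrsIn G v H ⊆ supp P ∪ {b, x} := by
      by_cases hnil : P.Nil
      · have hav : a = v := P.eq_of_length_eq_zero (SimpleGraph.Walk.nil_iff_length_eq.mp hnil)
        subst hav
        obtain rfl : P = SimpleGraph.Walk.nil := SimpleGraph.Walk.isPath_iff_eq_nil.mp hpath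
        obtain ⟨x, hxb, hpair⟩ := other_of_ncard_two (hdeg a haH) ⟨hbH, hadjba.symm⟩
        have hxmem : x ∈ nbrsIn G a H := by rw [hpair]; right; rfl
        have hax : G.Adj a x := hxmem.2
        refine ⟨x, hxmem.1, hxb, hax, ?_, ?_⟩
        · simp only [SimpleGraph.Walk.support_nil, List.mem_singleton]
          exact fun h => (h ▸ hax).ne' rfl
        · intro y hy
          rw [hpair] at hy
          rcases hy with rfl | rfl
          · exact Or.inr (Or.inl rfl)
          · exact Or.inr (Or.inr rfl)
      · obtain ⟨w₀, hw₀sup, hw₀v⟩ := exists_penult hnil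
        have hw₀H := (hsup w₀ hw₀sup).1
        have hw₀mem : w₀ ∈ nbrsIn G v H := ⟨hw₀H, hw₀v.symm⟩
        obtain ⟨x, hxw₀, hpair⟩ := other_of_ncard_two (hdeg v hvH) hw₀mem
        have hxmem : x ∈ nbrsIn G v H := by rw [hpair]; right; rfl
        have hav : a ≠ v := by
          intro h
          subst h
          exact hnil ((SimpleGraph.Walk.isPath_iff_eq_nil.mp hpath) ▸ SimpleGraph.Walk.nil_nil)
        have hxb : x ≠ b := by
          intro hxbe
          rw [hxbe] at hxmem
          have hvm : v ∈ nbrsIn G b H := ⟨hvH, hxmem.2.symm⟩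
          rw [hnb] at hvm
          rcases hvm with rfl | rfl
          · exact hav rfl
          · exact hvc rfl
        refine ⟨x, hxmem.1, hxb, hxmem.2, ?_, ?_⟩
        · intro hxs
          exact hxw₀ (hend x hxs w₀ hw₀sup hxmem.2 hw₀v.symm)
        · intro y hy
          rw [hpair] at hy
          rcases hy with rfl | rfl
          · exact Or.inl hw₀sup
          · exact Or.inr (Or.inr rfl)
    set Q' : G.Walk a x := (SimpleGraph.Walk.cons hvx.symm P.reverse).reverse with hQ'
    have hQ'sup : ∀ w, w ∈ Q'.support ↔ w = x ∨ w ∈ P.support := by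
      intro w
      rw [hQ', SimpleGraph.Walk.support_reverse, List.mem_reverse,
        SimpleGraph.Walk.support_cons, List.mem_cons,
        SimpleGraph.Walk.support_reverse, List.mem_reverse]
    have hQ'path : Q'.IsPath := by
      apply SimpleGraph.Walk.IsPath.reverse
      apply (hpath.reverse).cons
      rw [SimpleGraph.Walk.support_reverse, List.mem_reverse]
      exact hxsup
    have hQ'len : Q'.length = P.length + 1 := by
      rw [hQ', SimpleGraph.Walk.length_reverse, SimpleGraph.Walk.length_cons,
        SimpleGraph.Walk.length_reverse]
    have hsuppsub : supp P ⊆ supp Q' := fun w hw => (hQ'sup w).mpr (Or.inr hw)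
    refine ih x Q' hQ'path ?_ ?_ ?_ ?_
    · intro w hw
      rcases (hQ'sup w).mp hw with rfl | hw'
      · exact ⟨hxH, hxb⟩
      · exact hsup w hw'
    · intro w hw hwx
      rcases (hQ'sup w).mp hw with rfl | hw'
      · exact absurd rfl hwx
      by_cases hwv : w = v
      · subst hwv
        intro y hy
        rcases hclv hy with h | h | h
        · exact Or.inl (hsuppsub h)
        · exact Or.inr h
        · exact Or.inl ((hQ'sup y).mpr (Or.inl h))
      · intro y hy
        rcases hcl w hw' hwv hy with h | h
        · exact Or.inl (hsuppsub h)
        · exact Or.inr h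
    · intro y hy z hz hxy hxz
      have key : ∀ t, t ∈ Q'.support → G.Adj x t → t = v := by
        intro t ht hxt
        rcases (hQ'sup t).mp ht with rfl | ht'
        · exact absurd rfl hxt.ne'
        by_cases htv : t = v
        · exact htv
        · exfalso
          have hmem : x ∈ nbrsIn G t H := ⟨hxH, hxt.symm⟩
          rcases hcl t ht' htv hmem with h | h
          · exact hxsup h
          · exact hxb h
      rw [key y hy hxy, key z hz hxz]
    · omega

lemma ham_path {H : Set V} (hfin : H.Finite) (hcard : 4 ≤ H.ncard)
    (hconn : (G.induce H).Connected)
    (hdeg : ∀ v ∈ H, (nbrsIn G v H).ncard = 2)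
    {a b c : V} (hbH : b ∈ H) (haH : a ∈ H) (hcH : c ∈ H)
    (hnb : nbrsIn G b H = {a, c}) (hac : a ≠ c) :
    ∃ Q : G.Walk a c, Q.IsPath ∧ supp Q = H \ {b} := by
  classical
  have hadjba : G.Adj b a := (show a ∈ nbrsIn G b H by rw [hnb]; left; rfl).2
  have hadjbc : G.Adj b c := (show c ∈ nbrsIn G b H by rw [hnb]; right; rfl).2
  obtain ⟨Q, hQpath, hQsup, hQcl⟩ :=
    grow hfin hdeg hbH hnb hac haH H.ncard a SimpleGraph.Walk.nil
      (SimpleGraph.Walk.IsPath.nil)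
      (by intro w hw; simp only [SimpleGraph.Walk.support_nil, List.mem_singleton] at hw
          exact hw ▸ ⟨haH, hadjba.ne'⟩)
      (by intro w hw hwa
          simp only [SimpleGraph.Walk.support_nil, List.mem_singleton] at hw
          exact absurd hw hwa)
      (by intro y hy z hz _ _
          simp only [SimpleGraph.Walk.support_nil, List.mem_singleton] at hy hz
          rw [hy, hz])
      (by simp)
  have hQnil : ¬ Q.Nil := by
    intro h
    exact hac (Q.eq_of_length_eq_zero (SimpleGraph.Walk.nil_iff_length_eq.mp h))
  obtain ⟨w₀, hw₀, hw₀c⟩ := exists_penult hQnil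
  have hnbc : nbrsIn G c H = {b, w₀} :=
    eq_pair_of_ncard_two (hfin.subset (nbrsIn_subset' G c H)) (hdeg c hcH)
      ⟨hbH, hadjbc.symm⟩ ⟨(hQsup w₀ hw₀).1, hw₀c.symm⟩ (Ne.symm (hQsup w₀ hw₀).2)
  have hclosed : ∀ x ∈ (supp Q ∪ {b}), x ∈ H → ∀ y ∈ H, G.Adj x y → y ∈ supp Q ∪ {b} := by
    intro x hx hxH y hyH hadj
    rcases hx with hxQ | hxb
    · by_cases hxc : x = c
      · subst hxc
        have : y ∈ nbrsIn G x H := ⟨hyH, hadj⟩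
        rw [hnbc] at this
        rcases this with rfl | rfl
        · exact Or.inr rfl
        · exact Or.inl hw₀
      · exact hQcl x hxQ hxc ⟨hyH, hadj⟩
    · rcases hxb with rfl
      have : y ∈ nbrsIn G x H := ⟨hyH, hadj⟩
      rw [hnb] at this
      rcases this with rfl | rfl
      · exact Or.inl Q.start_mem_support
      · exact Or.inl Q.end_mem_support
  have hall : ∀ y ∈ H, y ∈ supp Q ∪ {b} := fun y hy =>
    closed_of_connected hconn hclosed (Or.inl Q.start_mem_support) haH hy
  refine ⟨Q, hQpath, ?_⟩
  ext w
  constructor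
  · intro hw
    exact ⟨(hQsup w hw).1, (hQsup w hw).2⟩
  · rintro ⟨hwH, hwb⟩
    rcases hall w hwH with h | h
    · exact h
    · exact absurd h hwb

lemma ncard_of_pendant {u : V} {H : Set V} (h : IsPendant G u H) :
    (nbrsIn G u H).ncard = 1 := by
  obtain ⟨-, a, ha⟩ := h
  rw [ha]
  exact Set.ncard_singleton a

lemma ncard_of_cap {u : V} {H : Set V} (h : IsCap G u H) :
    (nbrsIn G u H).ncard = 2 := by
  obtain ⟨-, a, b, hne, -, hset⟩ := h
  rw [hset]
  exact Set.ncard_pair hne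

lemma ncard_of_clone {u : V} {H : Set V} (h : IsClone G u H) :
    (nbrsIn G u H).ncard = 3 := by
  obtain ⟨y, -, x, z, -, -, -, hxy, hyz, hxz, hset⟩ := h
  rw [hset]
  exact Set.ncard_eq_three.mpr ⟨x, y, z, hxy.ne, hxz, hyz.ne, rfl⟩

end AuxTrichotomy

/-- In a (theta, pyramid, prism, turtle)-free graph, every minor vertex for a
hole `H` is exactly one of: a pendant of `H`, a cap of `H`, or a clone in `H`. -/
theorem minor_vertex_trichotomy {V : Type*} (G : SimpleGraph V) (hG : TPPTFree G)
    (H : Set V) (hH : IsHole G H) (u : V) (hu : IsMinorFor G u H) :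
    (IsPendant G u H ∧ ¬ IsCap G u H ∧ ¬ IsClone G u H) ∨
    (¬ IsPendant G u H ∧ IsCap G u H ∧ ¬ IsClone G u H) ∨
    (¬ IsPendant G u H ∧ ¬ IsCap G u H ∧ IsClone G u H) := by
  classical
  obtain ⟨hnT, hnP, hnPr, hnTu⟩ := hG
  obtain ⟨hfin, hcard, hconn, hdeg⟩ := hH
  obtain ⟨huH, hne, a, b, c, haH, hbH, hcH, hab, hbc, hac, hsub⟩ := hu
  have hNfin : (nbrsIn G u H).Finite := hfin.subset (nbrsIn_subset' G u H)
  have hnbB : nbrsIn G b H = {a, c} :=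
    eq_pair_of_ncard_two (hfin.subset (nbrsIn_subset' G b H)) (hdeg b hbH)
      ⟨haH, hab.symm⟩ ⟨hcH, hbc⟩ hac
  have hua : u ≠ a := fun h => huH (h ▸ haH)
  have hub : u ≠ b := fun h => huH (h ▸ hbH)
  have huc : u ≠ c := fun h => huH (h ▸ hcH)
  -- a and c are nonadjacent
  have hnac : ¬ G.Adj a c := by
    intro hadjac
    have hnbA : nbrsIn G a H = {b, c} :=
      eq_pair_of_ncard_two (hfin.subset (nbrsIn_subset' G a H)) (hdeg a haH)
        ⟨hbH, hab⟩ ⟨hcH, hadjac⟩ hbc.ne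
    have hnbC : nbrsIn G c H = {b, a} :=
      eq_pair_of_ncard_two (hfin.subset (nbrsIn_subset' G c H)) (hdeg c hcH)
        ⟨hbH, hbc.symm⟩ ⟨haH, hadjac.symm⟩ hab.ne'
    have hcl : ∀ x ∈ ({a, b, c} : Set V), x ∈ H → ∀ y ∈ H, G.Adj x y →
        y ∈ ({a, b, c} : Set V) := by
      intro x hx hxH y hyH hadj
      rcases hx with rfl | rfl | rfl
      · have hy : y ∈ nbrsIn G x H := ⟨hyH, hadj⟩
        rw [hnbA] at hy
        rcases hy with rfl | rfl
        · exact Or.inr (Or.inl rfl)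
        · exact Or.inr (Or.inr rfl)
      · have hy : y ∈ nbrsIn G x H := ⟨hyH, hadj⟩
        rw [hnbB] at hy
        rcases hy with rfl | rfl
        · exact Or.inl rfl
        · exact Or.inr (Or.inr rfl)
      · have hy : y ∈ nbrsIn G x H := ⟨hyH, hadj⟩
        rw [hnbC] at hy
        rcases hy with rfl | rfl
        · exact Or.inr (Or.inl rfl)
        · exact Or.inl rfl
    have hHsub : H ⊆ ({a, b, c} : Set V) := fun y hy =>
      closed_of_connected hconn hcl (Or.inl rfl) haH hy
    have h3 : H.ncard ≤ 3 := by
      calc H.ncard ≤ ({a, b, c} : Set V).ncard :=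
            Set.ncard_le_ncard hHsub (Set.toFinite _)
        _ ≤ 3 := by
            have h1 := Set.ncard_insert_le a ({b, c} : Set V)
            have h2 := Set.ncard_insert_le b ({c} : Set V)
            have h3 := Set.ncard_singleton c
            omega
    omega
  by_cases hA : G.Adj u a <;> by_cases hB : G.Adj u b <;> by_cases hC : G.Adj u c
  · -- clone of b
    have hN : nbrsIn G u H = {a, b, c} := by
      refine Set.Subset.antisymm hsub ?_
      rintro x (rfl | rfl | rfl)
      exacts [⟨haH, hA⟩, ⟨hbH, hB⟩, ⟨hcH, hC⟩]
    have hclone : IsClone G u H := ⟨b, huH, a, c, haH, hbH, hcH, hab, hbc, hac, hN⟩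
    refine Or.inr (Or.inr ⟨?_, ?_, hclone⟩)
    · intro hp
      have h1 := ncard_of_pendant hp
      have h2 := ncard_of_clone hclone
      omega
    · intro hcp
      have h1 := ncard_of_cap hcp
      have h2 := ncard_of_clone hclone
      omega
  · -- cap {a, b}
    have hN : nbrsIn G u H = {a, b} := by
      refine Set.Subset.antisymm ?_ ?_
      · intro x hx
        rcases hsub hx with rfl | rfl | rfl
        · exact Or.inl rfl
        · exact Or.inr rfl
        · exact absurd hx.2 hC
      · rintro x (rfl | rfl)
        exacts [⟨haH, hA⟩, ⟨hbH, hB⟩]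
    have hcap : IsCap G u H := ⟨huH, a, b, hab.ne, hab, hN⟩
    refine Or.inr (Or.inl ⟨?_, hcap, ?_⟩)
    · intro hp
      have h1 := ncard_of_pendant hp
      have h2 := ncard_of_cap hcap
      omega
    · intro hcl
      have h1 := ncard_of_clone hcl
      have h2 := ncard_of_cap hcap
      omega
  · -- theta: u adjacent to a and c only
    exfalso
    obtain ⟨Q, hQpath, hQsupp⟩ := ham_path hfin hcard hconn hdeg hbH haH hcH hnbB hac
    have hQmem : ∀ w, w ∈ Q.support ↔ (w ∈ H ∧ w ≠ b) := by
      intro w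
      constructor
      · intro hw
        have hw' : w ∈ supp Q := hw
        rw [hQsupp] at hw'
        exact ⟨hw'.1, hw'.2⟩
      · intro hw
        have hw' : w ∈ H \ {b} := ⟨hw.1, hw.2⟩
        rw [← hQsupp] at hw'
        exact hw'
    set P₁ : G.Walk a c := SimpleGraph.Walk.cons hab (SimpleGraph.Walk.cons hbc SimpleGraph.Walk.nil) with hP₁def
    set P₃ : G.Walk a c := SimpleGraph.Walk.cons hA.symm (SimpleGraph.Walk.cons hC SimpleGraph.Walk.nil) with hP₃def
    have hP1sup : P₁.support = [a, b, c] := rfl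
    have hP3sup : P₃.support = [a, u, c] := rfl
    have hP1path : P₁.IsPath := by
      rw [SimpleGraph.Walk.isPath_def, hP1sup]
      simp [hab.ne, hac, hbc.ne]
    have hP3path : P₃.IsPath := by
      rw [SimpleGraph.Walk.isPath_def, hP3sup]
      simp [(Ne.symm hua), hac, huc]
    have hQlen : 2 ≤ Q.length := by
      have h1 := supp_ncard hQpath
      rw [hQsupp, Set.ncard_diff_singleton_of_mem hbH] at h1
      omega
    -- the three holes
    have hset1 : supp P₁ ∪ supp Q = H := by
      ext x
      simp only [supp, Set.mem_union, Set.mem_setOf_eq, hP1sup, List.mem_cons,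
        List.mem_singleton, List.not_mem_nil, or_false, hQmem]
      constructor
      · rintro ((rfl | rfl | rfl) | ⟨h1, -⟩)
        exacts [haH, hbH, hcH, h1]
      · intro hx
        by_cases hxb : x = b
        · exact Or.inl (Or.inr (Or.inl hxb))
        · exact Or.inr ⟨hx, hxb⟩
    have hset2 : supp P₁ ∪ supp P₃ = ({a, b, c, u} : Set V) := by
      ext x
      simp only [supp, Set.mem_union, Set.mem_setOf_eq, hP1sup, hP3sup, List.mem_cons,
        List.mem_singleton, List.not_mem_nil, or_false, Set.mem_insert_iff,
        Set.mem_singleton_iff]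
      tauto
    have hset3 : supp Q ∪ supp P₃ = insert u (H \ {b}) := by
      ext x
      simp only [supp, Set.mem_union, Set.mem_setOf_eq, hP3sup, List.mem_cons,
        List.mem_singleton, List.not_mem_nil, or_false, hQmem, Set.mem_insert_iff,
        Set.mem_diff, Set.mem_singleton_iff]
      constructor
      · rintro (⟨h1, h2⟩ | (rfl | rfl | rfl))
        · exact Or.inr ⟨h1, h2⟩
        · exact Or.inr ⟨haH, hab.ne⟩
        · exact Or.inl rfl
        · exact Or.inr ⟨hcH, hbc.ne'⟩
      · rintro (rfl | ⟨h1, h2⟩)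
        · exact Or.inr (Or.inr (Or.inl rfl))
        · exact Or.inl ⟨h1, h2⟩
    have hfin4 : ({b, c, u} : Set V).Finite := Set.toFinite _
    have hole2 : IsHole G ({a, b, c, u} : Set V) := by
      refine ⟨Set.toFinite _, ?_, ?_, ?_⟩
      · have h4 : ({a, b, c, u} : Set V).ncard = 4 := by
          rw [Set.ncard_insert_of_notMem
              (by simp [hab.ne, hac, (Ne.symm hua)]) (Set.toFinite _),
            Set.ncard_insert_of_notMem (by simp [hbc.ne, (Ne.symm hub)]) (Set.toFinite _),
            Set.ncard_insert_of_notMem (by simp [(Ne.symm huc)]) (Set.toFinite _),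
            Set.ncard_singleton]
        omega
      · rw [connected_iff]
        have hbm : b ∈ ({a, b, c, u} : Set V) := by simp
        have hreach : ∀ (z : V) (hz : z ∈ ({a, b, c, u} : Set V)),
            (G.induce ({a, b, c, u} : Set V)).Reachable ⟨z, hz⟩ ⟨b, hbm⟩ := by
          intro z hz
          rcases hz with rfl | rfl | rfl | rfl
          · exact reachable_induce_of_walk (SimpleGraph.Walk.cons hab SimpleGraph.Walk.nil)
              (by intro v hv
                  simp only [SimpleGraph.Walk.support_cons, SimpleGraph.Walk.support_nil,
                    List.mem_cons, List.mem_singleton, List.not_mem_nil, or_false] at hv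
                  rcases hv with rfl | rfl <;> simp) _ _
          · exact Reachable.refl _
          · exact reachable_induce_of_walk (SimpleGraph.Walk.cons hbc.symm SimpleGraph.Walk.nil)
              (by intro v hv
                  simp only [SimpleGraph.Walk.support_cons, SimpleGraph.Walk.support_nil,
                    List.mem_cons, List.mem_singleton, List.not_mem_nil, or_false] at hv
                  rcases hv with rfl | rfl <;> simp) _ _
          · exact reachable_induce_of_walk
              (SimpleGraph.Walk.cons hA (SimpleGraph.Walk.cons hab SimpleGraph.Walk.nil))
              (by intro v hv
                  simp only [SimpleGraph.Walk.support_cons, SimpleGraph.Walk.support_nil,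
                    List.mem_cons, List.mem_singleton, List.not_mem_nil, or_false] at hv
                  rcases hv with rfl | rfl | rfl <;> simp) _ _
        constructor
        · rintro ⟨x, hx⟩ ⟨y, hy⟩
          exact (hreach x hx).trans (hreach y hy).symm
        · exact ⟨⟨b, hbm⟩⟩
      · intro v hv
        rcases hv with rfl | rfl | rfl | rfl
        · have heq : nbrsIn G v ({v, b, c, u} : Set V) = {b, u} := by
            ext x
            constructor
            · rintro ⟨(rfl | rfl | rfl | rfl), hadj⟩
              · exact absurd hadj (G.loopless.irrefl _)
              · exact Or.inl rfl
              · exact absurd hadj hnac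
              · exact Or.inr rfl
            · rintro (rfl | rfl)
              · exact ⟨by simp, hab⟩
              · exact ⟨by simp, hA.symm⟩
          rw [heq, Set.ncard_pair (Ne.symm hub)]
        · have heq : nbrsIn G v ({a, v, c, u} : Set V) = {a, c} := by
            ext x
            constructor
            · rintro ⟨(rfl | rfl | rfl | rfl), hadj⟩
              · exact Or.inl rfl
              · exact absurd hadj (G.loopless.irrefl _)
              · exact Or.inr rfl
              · exact absurd hadj.symm hB
            · rintro (rfl | rfl)
              · exact ⟨by simp, hab.symm⟩
              · exact ⟨by simp, hbc⟩
          rw [heq, Set.ncard_pair hac]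
        · have heq : nbrsIn G v ({a, b, v, u} : Set V) = {b, u} := by
            ext x
            constructor
            · rintro ⟨(rfl | rfl | rfl | rfl), hadj⟩
              · exact absurd hadj.symm hnac
              · exact Or.inl rfl
              · exact absurd hadj (G.loopless.irrefl _)
              · exact Or.inr rfl
            · rintro (rfl | rfl)
              · exact ⟨by simp, hbc.symm⟩
              · exact ⟨by simp, hC.symm⟩
          rw [heq, Set.ncard_pair (Ne.symm hub)]
        · have heq : nbrsIn G v ({a, b, c, v} : Set V) = {a, c} := by
            ext x
            constructor
            · rintro ⟨(rfl | rfl | rfl | rfl), hadj⟩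
              · exact Or.inl rfl
              · exact absurd hadj hB
              · exact Or.inr rfl
              · exact absurd hadj (G.loopless.irrefl _)
            · rintro (rfl | rfl)
              · exact ⟨by simp, hA⟩
              · exact ⟨by simp, hC⟩
          rw [heq, Set.ncard_pair hac]
    have hole3 : IsHole G (insert u (H \ {b})) := by
      have huHb : u ∉ H \ {b} := fun h => huH h.1
      refine ⟨hfin.diff.insert u, ?_, ?_, ?_⟩
      · have h1 : (H \ {b}).ncard = H.ncard - 1 :=
          Set.ncard_diff_singleton_of_mem hbH
        rw [Set.ncard_insert_of_notMem huHb hfin.diff, h1]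
        omega
      · rw [connected_iff]
        have haS : a ∈ insert u (H \ {b}) := Or.inr ⟨haH, hab.ne⟩
        have hreach : ∀ (z : V) (hz : z ∈ insert u (H \ {b})),
            (G.induce (insert u (H \ {b}))).Reachable ⟨z, hz⟩ ⟨a, haS⟩ := by
          intro z hz
          rcases hz with hzu | hz'
          · have hadj : (G.induce (insert u (H \ {b}))).Adj ⟨z, Set.mem_insert_iff.mpr (Or.inl hzu)⟩ ⟨a, haS⟩ := by
              have hza : G.Adj z a := by rw [hzu]; exact hA
              simpa using hza
            exact hadj.reachable
          · have hzQ : z ∈ Q.support := (hQmem z).mpr ⟨hz'.1, hz'.2⟩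
            have hsub' : ∀ v ∈ (Q.takeUntil z hzQ).support, v ∈ insert u (H \ {b}) := by
              intro v hv
              have hv' : v ∈ Q.support := SimpleGraph.Walk.support_takeUntil_subset _ hzQ hv
              exact Or.inr ⟨((hQmem v).mp hv').1, ((hQmem v).mp hv').2⟩
            exact (reachable_induce_of_walk (Q.takeUntil z hzQ) hsub' haS _).symm
        constructor
        · rintro ⟨x, hx⟩ ⟨y, hy⟩
          exact (hreach x hx).trans (hreach y hy).symm
        · exact ⟨⟨a, haS⟩⟩
      · intro v hv
        rcases hv with rfl | hv'
        · have heq : nbrsIn G v (insert v (H \ {b})) = {a, c} := by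
            ext x
            constructor
            · rintro ⟨hx1, hx2⟩
              rcases hx1 with rfl | ⟨hxH, hxb⟩
              · exact absurd hx2 (G.loopless.irrefl _)
              · rcases hsub ⟨hxH, hx2⟩ with rfl | rfl | rfl
                · exact Or.inl rfl
                · exact absurd rfl hxb
                · exact Or.inr rfl
            · rintro (rfl | rfl)
              · exact ⟨Or.inr ⟨haH, hab.ne⟩, hA⟩
              · exact ⟨Or.inr ⟨hcH, hbc.ne'⟩, hC⟩
          rw [heq, Set.ncard_pair hac]
        · by_cases hva : v = a
          · subst hva
            obtain ⟨x₀, hx₀b, hpair⟩ := other_of_ncard_two (hdeg v hv'.1) ⟨hbH, hab⟩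
            have hx₀mem : x₀ ∈ nbrsIn G v H := by rw [hpair]; right; rfl
            have heq : nbrsIn G v (insert u (H \ {b})) = {x₀, u} := by
              ext x
              constructor
              · rintro ⟨hx1, hx2⟩
                rcases hx1 with rfl | ⟨hxH, hxb⟩
                · exact Or.inr rfl
                · have hx3 : x ∈ nbrsIn G v H := ⟨hxH, hx2⟩
                  rw [hpair] at hx3
                  rcases hx3 with rfl | rfl
                  · exact absurd rfl hxb
                  · exact Or.inl rfl
              · rintro (rfl | rfl)
                · exact ⟨Or.inr ⟨hx₀mem.1, hx₀b⟩, hx₀mem.2⟩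
                · exact ⟨Or.inl rfl, hA.symm⟩
            rw [heq, Set.ncard_pair (fun h => huH (by rw [← h]; exact hx₀mem.1))]
          · by_cases hvc : v = c
            · subst hvc
              obtain ⟨x₀, hx₀b, hpair⟩ := other_of_ncard_two (hdeg v hv'.1) ⟨hbH, hbc.symm⟩
              have hx₀mem : x₀ ∈ nbrsIn G v H := by rw [hpair]; right; rfl
              have heq : nbrsIn G v (insert u (H \ {b})) = {x₀, u} := by
                ext x
                constructor
                · rintro ⟨hx1, hx2⟩
                  rcases hx1 with rfl | ⟨hxH, hxb⟩
                  · exact Or.inr rfl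
                  · have hx3 : x ∈ nbrsIn G v H := ⟨hxH, hx2⟩
                    rw [hpair] at hx3
                    rcases hx3 with rfl | rfl
                    · exact absurd rfl hxb
                    · exact Or.inl rfl
                · rintro (rfl | rfl)
                  · exact ⟨Or.inr ⟨hx₀mem.1, hx₀b⟩, hx₀mem.2⟩
                  · exact ⟨Or.inl rfl, hC.symm⟩
              rw [heq, Set.ncard_pair (fun h => huH (by rw [← h]; exact hx₀mem.1))]
            · have heq : nbrsIn G v (insert u (H \ {b})) = nbrsIn G v H := by
                ext x
                constructor
                · rintro ⟨hx1, hx2⟩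
                  rcases hx1 with rfl | ⟨hxH, hxb⟩
                  · exfalso
                    rcases hsub ⟨hv'.1, hx2.symm⟩ with rfl | rfl | rfl
                    · exact hva rfl
                    · exact hv'.2 rfl
                    · exact hvc rfl
                  · exact ⟨hxH, hx2⟩
                · rintro ⟨hxH, hx2⟩
                  refine ⟨Or.inr ⟨hxH, ?_⟩, hx2⟩
                  intro hxb
                  have hvm : v ∈ nbrsIn G b H := ⟨hv'.1, (hxb ▸ hx2).symm⟩
                  rw [hnbB] at hvm
                  rcases hvm with rfl | rfl
                  · exact hva rfl
                  · exact hvc rfl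
              rw [heq]
              exact hdeg v hv'.1
    apply hnT
    refine ⟨a, c, P₁, Q, P₃, hac, hnac, hP1path, hQpath, hP3path, by simp [hP₁def], hQlen,
      by simp [hP₃def], ?_, ?_, ?_, hset1 ▸ (⟨hfin, hcard, hconn, hdeg⟩ : IsHole G H),
      hset2 ▸ hole2, hset3 ▸ hole3⟩
    · intro v h1 h2
      rw [hP1sup] at h1
      simp only [List.mem_cons, List.mem_singleton, List.not_mem_nil, or_false] at h1
      rcases h1 with rfl | rfl | rfl
      · exact Or.inl rfl
      · exact absurd ((hQmem v).mp h2).2 (fun h => h rfl)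
      · exact Or.inr rfl
    · intro v h1 h2
      rw [hP1sup] at h1
      rw [hP3sup] at h2
      simp only [List.mem_cons, List.mem_singleton, List.not_mem_nil, or_false] at h1 h2
      rcases h1 with rfl | rfl | rfl
      · exact Or.inl rfl
      · rcases h2 with h | h | h
        · exact absurd h hab.ne'
        · exact absurd h (Ne.symm hub)
        · exact absurd h hbc.ne
      · exact Or.inr rfl
    · intro v h1 h2
      rw [hP3sup] at h2
      simp only [List.mem_cons, List.mem_singleton, List.not_mem_nil, or_false] at h2
      rcases h2 with rfl | rfl | rfl
      · exact Or.inl rfl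
      · exact absurd ((hQmem v).mp h1).1 huH
      · exact Or.inr rfl
  · -- pendant a
    have hN : nbrsIn G u H = {a} := by
      refine Set.Subset.antisymm ?_ ?_
      · intro x hx
        rcases hsub hx with rfl | rfl | rfl
        · rfl
        · exact absurd hx.2 hB
        · exact absurd hx.2 hC
      · rintro x rfl
        exact ⟨haH, hA⟩
    have hpend : IsPendant G u H := ⟨huH, a, hN⟩
    refine Or.inl ⟨hpend, ?_, ?_⟩
    · intro hcp
      have h1 := ncard_of_cap hcp
      have h2 := ncard_of_pendant hpend
      omega
    · intro hcl
      have h1 := ncard_of_clone hcl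
      have h2 := ncard_of_pendant hpend
      omega
  · -- cap {b, c}
    have hN : nbrsIn G u H = {b, c} := by
      refine Set.Subset.antisymm ?_ ?_
      · intro x hx
        rcases hsub hx with rfl | rfl | rfl
        · exact absurd hx.2 hA
        · exact Or.inl rfl
        · exact Or.inr rfl
      · rintro x (rfl | rfl)
        exacts [⟨hbH, hB⟩, ⟨hcH, hC⟩]
    have hcap : IsCap G u H := ⟨huH, b, c, hbc.ne, hbc, hN⟩
    refine Or.inr (Or.inl ⟨?_, hcap, ?_⟩)
    · intro hp
      have h1 := ncard_of_pendant hp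
      have h2 := ncard_of_cap hcap
      omega
    · intro hcl
      have h1 := ncard_of_clone hcl
      have h2 := ncard_of_cap hcap
      omega
  · -- pendant b
    have hN : nbrsIn G u H = {b} := by
      refine Set.Subset.antisymm ?_ ?_
      · intro x hx
        rcases hsub hx with rfl | rfl | rfl
        · exact absurd hx.2 hA
        · rfl
        · exact absurd hx.2 hC
      · rintro x rfl
        exact ⟨hbH, hB⟩
    have hpend : IsPendant G u H := ⟨huH, b, hN⟩
    refine Or.inl ⟨hpend, ?_, ?_⟩
    · intro hcp
      have h1 := ncard_of_cap hcp
      have h2 := ncard_of_pendant hpend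
      omega
    · intro hcl
      have h1 := ncard_of_clone hcl
      have h2 := ncard_of_pendant hpend
      omega
  · -- pendant c
    have hN : nbrsIn G u H = {c} := by
      refine Set.Subset.antisymm ?_ ?_
      · intro x hx
        rcases hsub hx with rfl | rfl | rfl
        · exact absurd hx.2 hA
        · exact absurd hx.2 hB
        · rfl
      · rintro x rfl
        exact ⟨hcH, hC⟩
    have hpend : IsPendant G u H := ⟨huH, c, hN⟩
    refine Or.inl ⟨hpend, ?_, ?_⟩
    · intro hcp
      have h1 := ncard_of_cap hcp
      have h2 := ncard_of_pendant hpend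
      omega
    · intro hcl
      have h1 := ncard_of_clone hcl
      have h2 := ncard_of_pendant hpend
      omega
  · -- impossible: no neighbor
    exfalso
    obtain ⟨x, hx⟩ := hne
    rcases hsub hx with rfl | rfl | rfl
    exacts [hA hx.2, hB hx.2, hC hx.2]

end Paper
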